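/- Let 1 ≤ k < k_0 be integers, let π ∈ ℝ^{k_0} have strictly positive entries with Σ_a π_a = 1, let λ ∈ ℝ^{k_0×k_0} be symmetric with strictly positive entries such that no two distinct columns of λ are proportional (i.e., for all a ≠ b there is no constant c > 0 with λ_{ia} = c·λ_{ib} for every i), and let h : {1,…,k_0} → {1,…,k} be surjective. Then F(π, λ) > F(π*, λ*), where (π*, λ*) are the parameters obtained by merging the communities according to h; in particular the difference F(π, λ) − F(π*, λ*) is strictly positive. -/

import Mathlib

open Finset

/-- `[Lp]_a = Σ_b L_{ab} p_b`. -/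
def rowSum {m : ℕ} (L : Fin m → Fin m → ℝ) (p : Fin m → ℝ) (a : Fin m) : ℝ :=
  ∑ b, L a b * p b

/-- `F(p, L) = Σ_{a,b} p_a p_b L_{ab} log(L_{ab} / ([Lp]_a [Lp]_b))`. -/
noncomputable def F {m : ℕ} (p : Fin m → ℝ) (L : Fin m → Fin m → ℝ) : ℝ :=
  ∑ a, ∑ b, p a * p b * L a b *
    Real.log (L a b / (rowSum L p a * rowSum L p b))

/-- Merged probability vector `π*_c = Σ_{a : h(a) = c} π_a`. -/
def mergedPi {k0 k : ℕ} (h : Fin k0 → Fin k) (p : Fin k0 → ℝ) (c : Fin k) : ℝ :=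
  ∑ a ∈ Finset.univ.filter (fun a => h a = c), p a

/-- Merged connectivity matrix
`λ*_{cd} = (Σ_{a : h(a)=c} Σ_{b : h(b)=d} π_a π_b λ_{ab}) / (π*_c π*_d)`. -/
noncomputable def mergedLambda {k0 k : ℕ} (h : Fin k0 → Fin k)
    (p : Fin k0 → ℝ) (L : Fin k0 → Fin k0 → ℝ) (c d : Fin k) : ℝ :=
  (∑ a ∈ Finset.univ.filter (fun a => h a = c),
      ∑ b ∈ Finset.univ.filter (fun b => h b = d), p a * p b * L a b) /
    (mergedPi h p c * mergedPi h p d)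

lemma logsum_le {ι : Type*} (t : Finset ι) (ht : t.Nonempty) (w z : ι → ℝ)
    (hw : ∀ i ∈ t, 0 < w i) (hz : ∀ i ∈ t, 0 < z i) :
    (∑ i ∈ t, w i) * Real.log ((∑ i ∈ t, w i) / (∑ i ∈ t, z i)) ≤
      ∑ i ∈ t, w i * Real.log (w i / z i) := by
  set W := ∑ i ∈ t, w i with hW
  set Z := ∑ i ∈ t, z i with hZ
  have hZpos : 0 < Z := Finset.sum_pos hz ht
  have key := Real.convexOn_mul_log.map_sum_le (t := t) (w := fun i => z i / Z)
    (p := fun i => w i / z i)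
    (fun i hi => le_of_lt (div_pos (hz i hi) hZpos))
    (by rw [← Finset.sum_div]; field_simp; exact hZ.symm)
    (fun i hi => Set.mem_Ici.mpr (le_of_lt (div_pos (hw i hi) (hz i hi))))
  simp only [smul_eq_mul] at key
  have h1 : ∑ i ∈ t, z i / Z * (w i / z i) = W / Z := by
    rw [hW, Finset.sum_div]
    refine Finset.sum_congr rfl fun i hi => ?_
    have hzi := (hz i hi).ne'
    field_simp
  rw [h1] at key
  have h2 : ∑ i ∈ t, z i / Z * (w i / z i * Real.log (w i / z i)) =
      (∑ i ∈ t, w i * Real.log (w i / z i)) / Z := by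
    rw [Finset.sum_div]
    refine Finset.sum_congr rfl fun i hi => ?_
    have := (hz i hi).ne'
    field_simp
  rw [h2] at key
  have h3 : W / Z * Real.log (W / Z) = (W * Real.log (W / Z)) / Z := by ring
  rw [h3] at key
  exact (div_le_div_iff_of_pos_right hZpos).mp key

lemma logsum_lt {ι : Type*} (t : Finset ι) (ht : t.Nonempty) (w z : ι → ℝ)
    (hw : ∀ i ∈ t, 0 < w i) (hz : ∀ i ∈ t, 0 < z i)
    (hne : ∃ i ∈ t, ∃ j ∈ t, w i / z i ≠ w j / z j) :
    (∑ i ∈ t, w i) * Real.log ((∑ i ∈ t, w i) / (∑ i ∈ t, z i)) <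
      ∑ i ∈ t, w i * Real.log (w i / z i) := by
  set W := ∑ i ∈ t, w i with hW
  set Z := ∑ i ∈ t, z i with hZ
  have hZpos : 0 < Z := Finset.sum_pos hz ht
  have key := Real.strictConvexOn_mul_log.map_sum_lt (t := t) (w := fun i => z i / Z)
    (p := fun i => w i / z i)
    (fun i hi => div_pos (hz i hi) hZpos)
    (by rw [← Finset.sum_div]; field_simp; exact hZ.symm)
    (fun i hi => Set.mem_Ici.mpr (le_of_lt (div_pos (hw i hi) (hz i hi))))
    hne
  simp only [smul_eq_mul] at key
  have h1 : ∑ i ∈ t, z i / Z * (w i / z i) = W / Z := by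
    rw [hW, Finset.sum_div]
    refine Finset.sum_congr rfl fun i hi => ?_
    have hzi := (hz i hi).ne'
    field_simp
  rw [h1] at key
  have h2 : ∑ i ∈ t, z i / Z * (w i / z i * Real.log (w i / z i)) =
      (∑ i ∈ t, w i * Real.log (w i / z i)) / Z := by
    rw [Finset.sum_div]
    refine Finset.sum_congr rfl fun i hi => ?_
    have := (hz i hi).ne'
    field_simp
  rw [h2] at key
  have h3 : W / Z * Real.log (W / Z) = (W * Real.log (W / Z)) / Z := by ring
  rw [h3] at key
  exact (div_lt_div_iff_of_pos_right hZpos).mp key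

/-- under identifiability (no two distinct columns of `λ` are
proportional), merging strictly fewer communities strictly decreases `F`. -/
theorem merging_strictly_decreases_F (k k0 : ℕ) (hk : 1 ≤ k) (hkk0 : k < k0)
    (p : Fin k0 → ℝ) (hp : ∀ a, 0 < p a) (hp1 : ∑ a, p a = 1)
    (L : Fin k0 → Fin k0 → ℝ) (hLsym : ∀ a b, L a b = L b a)
    (hLpos : ∀ a b, 0 < L a b)
    (hident : ∀ a b : Fin k0, a ≠ b →
      ¬ ∃ c : ℝ, 0 < c ∧ ∀ i, L i a = c * L i b)
    (h : Fin k0 → Fin k) (hs : Function.Surjective h) :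
    F (mergedPi h p) (mergedLambda h p L) < F p L := by
  classical
  haveI : Nonempty (Fin k0) := ⟨⟨0, by omega⟩⟩
  set ν : Fin k0 → Fin k0 → ℝ := fun a b => p a * p b * L a b with hν
  set σ : Fin k0 → ℝ := fun a => p a * rowSum L p a with hσ
  have hr : ∀ a, 0 < rowSum L p a := fun a =>
    Finset.sum_pos (fun b _ => mul_pos (hLpos a b) (hp b)) Finset.univ_nonempty
  have hσpos : ∀ a, 0 < σ a := fun a => mul_pos (hp a) (hr a)
  have hνpos : ∀ a b, 0 < ν a b := fun a b => mul_pos (mul_pos (hp a) (hp b)) (hLpos a b)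
  have hσsum : ∀ a, σ a = ∑ b, ν a b := by
    intro a
    simp only [hσ, hν, rowSum, Finset.mul_sum]
    exact Finset.sum_congr rfl fun b _ => by ring
  -- ratio identity
  have hratio : ∀ a b, ν a b / (σ a * σ b) = L a b / (rowSum L p a * rowSum L p b) := by
    intro a b
    have h1 := (hp a).ne'
    have h2 := (hp b).ne'
    have h3 := (hr a).ne'
    have h4 := (hr b).ne'
    simp only [hν, hσ]
    field_simp
  -- Step A: rewrite F p L
  have hFpL : F p L = ∑ a, ∑ b, ν a b * Real.log (ν a b / (σ a * σ b)) := by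
    unfold F
    refine Finset.sum_congr rfl fun a _ => Finset.sum_congr rfl fun b _ => ?_
    rw [hratio a b]
  -- fibers
  set fib : Fin k → Finset (Fin k0) := fun c => Finset.univ.filter (fun a => h a = c) with hfib
  have hfibne : ∀ c, (fib c).Nonempty := by
    intro c
    obtain ⟨a, ha⟩ := hs c
    exact ⟨a, by simp [hfib, ha]⟩
  have hπpos : ∀ c, 0 < mergedPi h p c := fun c =>
    Finset.sum_pos (fun a _ => hp a) (hfibne c)
  set νs : Fin k → Fin k → ℝ := fun c d => ∑ a ∈ fib c, ∑ b ∈ fib d, ν a b with hνs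
  set σs : Fin k → ℝ := fun c => ∑ a ∈ fib c, σ a with hσs
  have hνspos : ∀ c d, 0 < νs c d := fun c d =>
    Finset.sum_pos (fun a _ => Finset.sum_pos (fun b _ => hνpos a b) (hfibne d)) (hfibne c)
  have hσspos : ∀ c, 0 < σs c := fun c => Finset.sum_pos (fun a _ => hσpos a) (hfibne c)
  have hσssum : ∀ c, σs c = ∑ d, νs c d := by
    intro c
    rw [show (∑ d, νs c d) = ∑ a ∈ fib c, ∑ d, ∑ b ∈ fib d, ν a b from Finset.sum_comm]
    refine Finset.sum_congr rfl fun a _ => ?_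
    rw [Finset.sum_fiberwise Finset.univ h (ν a)]
    exact hσsum a
  have hlam : ∀ c d, mergedLambda h p L c d = νs c d / (mergedPi h p c * mergedPi h p d) := by
    intro c d; rfl
  have hrows : ∀ c, rowSum (mergedLambda h p L) (mergedPi h p) c = σs c / mergedPi h p c := by
    intro c
    unfold rowSum
    rw [hσssum c, Finset.sum_div]
    refine Finset.sum_congr rfl fun d _ => ?_
    rw [hlam c d]
    have := (hπpos c).ne'
    have := (hπpos d).ne'
    field_simp
  -- Step B: rewrite merged F
  have hFm : F (mergedPi h p) (mergedLambda h p L) =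
      ∑ c, ∑ d, νs c d * Real.log (νs c d / (σs c * σs d)) := by
    unfold F
    refine Finset.sum_congr rfl fun c _ => Finset.sum_congr rfl fun d _ => ?_
    rw [hlam c d, hrows c, hrows d]
    have h1 := (hπpos c).ne'
    have h2 := (hπpos d).ne'
    have h3 := (hσspos c).ne'
    have h4 := (hσspos d).ne'
    have e1 : mergedPi h p c * mergedPi h p d *
        (νs c d / (mergedPi h p c * mergedPi h p d)) = νs c d := by
      field_simp
    have e2 : νs c d / (mergedPi h p c * mergedPi h p d) /
        (σs c / mergedPi h p c * (σs d / mergedPi h p d)) = νs c d / (σs c * σs d) := by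
      field_simp
    rw [e1, e2]
  -- Step C: fiberwise decomposition of F p L
  have hFpL2 : F p L = ∑ c, ∑ d, ∑ a ∈ fib c, ∑ b ∈ fib d,
      ν a b * Real.log (ν a b / (σ a * σ b)) := by
    rw [hFpL]
    rw [← Finset.sum_fiberwise (g := h)
      (f := fun a => ∑ b, ν a b * Real.log (ν a b / (σ a * σ b))) Finset.univ]
    refine Finset.sum_congr rfl fun c _ => ?_
    rw [show (∑ d, ∑ a ∈ fib c, ∑ b ∈ fib d, ν a b * Real.log (ν a b / (σ a * σ b)))
        = ∑ a ∈ fib c, ∑ d, ∑ b ∈ fib d, ν a b * Real.log (ν a b / (σ a * σ b))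
      from Finset.sum_comm]
    refine Finset.sum_congr rfl fun a _ => ?_
    rw [Finset.sum_fiberwise Finset.univ h
      (fun b => ν a b * Real.log (ν a b / (σ a * σ b)))]
  -- blockwise inequalities
  have hblock_le : ∀ c d, νs c d * Real.log (νs c d / (σs c * σs d)) ≤
      ∑ a ∈ fib c, ∑ b ∈ fib d, ν a b * Real.log (ν a b / (σ a * σ b)) := by
    intro c d
    have key := logsum_le ((fib c) ×ˢ (fib d)) ((hfibne c).product (hfibne d))
      (fun x => ν x.1 x.2) (fun x => σ x.1 * σ x.2)
      (fun x hx => hνpos x.1 x.2)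
      (fun x hx => mul_pos (hσpos x.1) (hσpos x.2))
    rw [Finset.sum_product] at key
    rw [Finset.sum_product] at key
    rw [Finset.sum_product] at key
    have hz : ∑ a ∈ fib c, ∑ b ∈ fib d, σ a * σ b = σs c * σs d := by
      rw [hσs, Finset.sum_mul_sum]
    rw [hz] at key
    exact key
  -- strict block
  obtain ⟨a0, b0, hab, hh⟩ := Fintype.exists_ne_map_eq_of_card_lt h (by simp [hkk0])
  have hident' := hident a0 b0 hab
  push_neg at hident'
  obtain ⟨i0, hi0⟩ := hident' (rowSum L p a0 / rowSum L p b0)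
    (div_pos (hr a0) (hr b0))
  have hratio_ne : ν a0 i0 / (σ a0 * σ i0) ≠ ν b0 i0 / (σ b0 * σ i0) := by
    rw [hratio, hratio]
    intro hEq
    apply hi0
    have h3 := (hr a0).ne'
    have h4 := (hr b0).ne'
    have h5 := (hr i0).ne'
    rw [div_eq_div_iff (by positivity) (by positivity)] at hEq
    have hEq2 : L a0 i0 * rowSum L p b0 * rowSum L p i0
        = L b0 i0 * rowSum L p a0 * rowSum L p i0 := by linear_combination hEq
    have hEq3 : L a0 i0 * rowSum L p b0 = L b0 i0 * rowSum L p a0 :=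
      mul_right_cancel₀ h5 hEq2
    rw [hLsym i0 a0, hLsym i0 b0, div_mul_eq_mul_div, eq_div_iff h4]
    linear_combination hEq3
  have hblock_lt : νs (h a0) (h i0) * Real.log (νs (h a0) (h i0) / (σs (h a0) * σs (h i0))) <
      ∑ a ∈ fib (h a0), ∑ b ∈ fib (h i0), ν a b * Real.log (ν a b / (σ a * σ b)) := by
    have key := logsum_lt ((fib (h a0)) ×ˢ (fib (h i0))) ((hfibne _).product (hfibne _))
      (fun x => ν x.1 x.2) (fun x => σ x.1 * σ x.2)
      (fun x hx => hνpos x.1 x.2)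
      (fun x hx => mul_pos (hσpos x.1) (hσpos x.2))
      ⟨(a0, i0), by simp [hfib, Finset.mem_product], (b0, i0),
        by simp [hfib, Finset.mem_product, hh], hratio_ne⟩
    rw [Finset.sum_product] at key
    rw [Finset.sum_product] at key
    rw [Finset.sum_product] at key
    have hz : ∑ a ∈ fib (h a0), ∑ b ∈ fib (h i0), σ a * σ b = σs (h a0) * σs (h i0) := by
      rw [hσs, Finset.sum_mul_sum]
    rw [hz] at key
    exact key
  -- combine
  rw [hFm, hFpL2, ← Finset.sum_product', ← Finset.sum_product']
  exact Finset.sum_lt_sum (fun x _ => hblock_le x.1 x.2)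
    ⟨(h a0, h i0), Finset.mem_univ _, hblock_lt⟩
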